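/- For any n ≥ 100, m = ⌈√n⌉, and any real s ≥ 2: under μ_n^m, Pr[n₁ ≤ s] ≤ e²·s/√n. -/

import Mathlib

open Finset

/-- Pivot list: p₀ = 1, then the sorted pivots, then p_m = n+1. -/
def pivotList (n : ℕ) (P : Finset ℕ) : List ℕ :=
  1 :: (P.sort (· ≤ ·)) ++ [n + 1]

/-- The i-th gap (bucket size) nᵢ = pᵢ − pᵢ₋₁, for i = 1,…,m. -/
def gap (n : ℕ) (P : Finset ℕ) (i : ℕ) : ℕ :=
  (pivotList n P).getD i 0 - (pivotList n P).getD (i - 1) 0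

/-- Sample space of μ_n^m : all (m−1)-element subsets of {2,…,n}. -/
def pivotSets (n m : ℕ) : Finset (Finset ℕ) :=
  (Finset.Icc 2 n).powersetCard (m - 1)

set_option maxHeartbeats 1000000 in
theorem stmt_3 (n : ℕ) (hn : 100 ≤ n) (m : ℕ) (hm : m = ⌈Real.sqrt n⌉₊)
    (s : ℝ) (hs : 2 ≤ s) :
    (((pivotSets n m).filter (fun P => (gap n P 1 : ℝ) ≤ s)).card : ℝ)
        / (pivotSets n m).card
      ≤ Real.exp 2 * s / Real.sqrt n := by
  set r : ℝ := Real.sqrt n with hr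
  have hrn : r * r = n := Real.mul_self_sqrt (by positivity)
  have hr0 : 0 ≤ r := Real.sqrt_nonneg _
  have hr10 : (10 : ℝ) ≤ r := by
    rw [hr, Real.le_sqrt' (by norm_num)]
    norm_num; exact_mod_cast hn
  have hm10 : 10 ≤ m := by
    have := Nat.le_ceil r
    rw [← hm] at this
    exact_mod_cast le_trans hr10 this
  have hmn : m ≤ n := by
    rw [hm]
    apply Nat.ceil_le.mpr
    nlinarith [(by exact_mod_cast hn : (100:ℝ) ≤ (n:ℝ))]
  obtain ⟨j, hj⟩ : ∃ j, m = j + 2 := ⟨m - 2, by omega⟩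
  have hjlt : ((j : ℝ) + 1) < r := by
    have h1 : j + 1 < ⌈r⌉₊ := by omega
    have := Nat.lt_ceil.mp h1
    push_cast at this ⊢
    exact this
  have hmlt : (m : ℝ) < r + 1 := by rw [hm]; exact Nat.ceil_lt_add_one hr0
  -- the minimum as a total function
  set minf : Finset ℕ → ℕ := fun P => (P.sort (· ≤ ·)).getD 0 0 with hminf
  have hmem : ∀ P ∈ pivotSets n m, P.card = j + 1 ∧ P ⊆ Finset.Icc 2 n := by
    intro P hP
    obtain ⟨h1, h2⟩ := Finset.mem_powersetCard.mp hP
    exact ⟨by omega, h1⟩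
  have hminkey : ∀ P ∈ pivotSets n m, ∃ hne : P.Nonempty,
      minf P = P.min' hne ∧ gap n P 1 = minf P - 1 := by
    intro P hP
    obtain ⟨hcard, hsub⟩ := hmem P hP
    have hne : P.Nonempty := Finset.card_pos.mp (by omega)
    have hlen : 0 < (P.sort (· ≤ ·)).length := by
      rw [Finset.length_sort]; omega
    have h1 : minf P = P.min' hne := by
      rw [hminf]
      simp only [List.getD_eq_getElem _ _ hlen]
      exact Finset.sorted_zero_eq_min' (h := hlen)
    refine ⟨hne, h1, ?_⟩
    have h2 : (pivotList n P).getD 1 0 = minf P := by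
      show ((1 :: ((P.sort (· ≤ ·)) ++ [n+1])).getD 1 0) = minf P
      rw [List.getD_cons_succ, List.getD_append _ _ _ _ hlen]
    have h3 : (pivotList n P).getD 0 0 = 1 := rfl
    rw [gap, h2, h3]
  clear_value r
  clear_value minf
  -- counting
  have hcount : ((pivotSets n m).filter (fun P => (gap n P 1 : ℝ) ≤ s)).card
      ≤ ⌊s⌋₊ * Nat.choose (n-1) j := by
    have := Finset.card_le_card_of_injOn
      (f := fun P => (minf P, P.erase (minf P)))
      (s := (pivotSets n m).filter (fun P => (gap n P 1 : ℝ) ≤ s))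
      (t := (Finset.Icc 2 (⌊s⌋₊ + 1)) ×ˢ ((Finset.Icc 2 n).powersetCard j))
      ?_ ?_
    · calc _ ≤ _ := this
        _ = ⌊s⌋₊ * Nat.choose (n-1) j := by
          rw [Finset.card_product, Finset.card_powersetCard, Nat.card_Icc, Nat.card_Icc]
          congr 1 <;> omega
    · intro P hP
      rw [Finset.mem_coe, Finset.mem_filter] at hP
      obtain ⟨hP1, hP2⟩ := hP
      obtain ⟨hne, hmin, hg⟩ := hminkey P hP1
      obtain ⟨hcard, hsub⟩ := hmem P hP1
      have hminmem : minf P ∈ P := hmin ▸ P.min'_mem hne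
      have h2min : 2 ≤ minf P := (Finset.mem_Icc.mp (hsub hminmem)).1
      have hfl : gap n P 1 ≤ ⌊s⌋₊ := Nat.le_floor hP2
      show (minf P, P.erase (minf P)) ∈ _
      rw [Finset.mem_coe, Finset.mem_product, Finset.mem_Icc, Finset.mem_powersetCard]
      refine ⟨⟨h2min, by omega⟩, fun x hx => hsub (Finset.mem_of_mem_erase hx), ?_⟩
      rw [Finset.card_erase_of_mem hminmem, hcard]
      omega
    · intro P hP Q hQ heq
      simp only [Finset.coe_filter, Set.mem_setOf_eq, Prod.mk.injEq] at hP hQ heq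
      obtain ⟨hne, hminP, -⟩ := hminkey P hP.1
      obtain ⟨hneQ, hminQ, -⟩ := hminkey Q hQ.1
      have h1 : minf P ∈ P := hminP ▸ P.min'_mem hne
      have h2 : minf Q ∈ Q := hminQ ▸ Q.min'_mem hneQ
      rw [← Finset.insert_erase h1, heq.2, heq.1, Finset.insert_erase h2]
  -- total count
  have htot : (pivotSets n m).card = Nat.choose (n-1) (j+1) := by
    rw [pivotSets, Finset.card_powersetCard, Nat.card_Icc]
    congr 1 <;> omega
  have hTpos : 0 < Nat.choose (n-1) (j+1) := Nat.choose_pos (by omega)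
  -- real arithmetic
  have hT0 : (0:ℝ) < (Nat.choose (n-1) (j+1) : ℝ) := by exact_mod_cast hTpos
  have hC0 : (0:ℝ) ≤ (Nat.choose (n-1) j : ℝ) := by positivity
  have hCT : (Nat.choose (n-1) (j+1) : ℝ) * ((j:ℝ) + 1)
      = (Nat.choose (n-1) j : ℝ) * ((n:ℝ) - 1 - j) := by
    have h := congrArg (Nat.cast : ℕ → ℝ) (Nat.choose_succ_right_eq (n-1) j)
    push_cast [Nat.cast_sub (show j ≤ n-1 by omega), Nat.cast_sub (show 1 ≤ n by omega)] at h
    linarith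
  have hfloor : (⌊s⌋₊ : ℝ) ≤ s := Nat.floor_le (by linarith)
  have hFle : (((pivotSets n m).filter (fun P => (gap n P 1 : ℝ) ≤ s)).card : ℝ)
      ≤ s * (Nat.choose (n-1) j : ℝ) := by
    calc (((pivotSets n m).filter (fun P => (gap n P 1 : ℝ) ≤ s)).card : ℝ)
        ≤ (⌊s⌋₊ : ℝ) * (Nat.choose (n-1) j : ℝ) := by exact_mod_cast hcount
      _ ≤ s * (Nat.choose (n-1) j : ℝ) := mul_le_mul_of_nonneg_right hfloor hC0
  rw [htot, div_le_div_iff₀ hT0 (by linarith : (0:ℝ) < r)]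
  have hexp : (3:ℝ) ≤ Real.exp 2 := by
    have := Real.add_one_le_exp 2; linarith
  have hmr : (j:ℝ) = (m:ℝ) - 2 := by
    have : ((j:ℝ) + 2) = (m:ℝ) := by rw [hj]; push_cast; ring
    linarith
  have hd : (0:ℝ) < (n:ℝ) - 1 - j := by
    have : (n:ℝ) ≥ 100 := by exact_mod_cast hn
    nlinarith [hmlt, hr10, hrn]
  have hlb : (n:ℝ) - r ≤ (n:ℝ) - 1 - j := by rw [hmr]; linarith [hmlt]
  have h2n : (n:ℝ) ≤ 3 * ((n:ℝ) - r) := by nlinarith [hrn, hr10, hr0]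
  have key : (Nat.choose (n-1) j : ℝ) * r ≤ Real.exp 2 * (Nat.choose (n-1) (j+1) : ℝ) := by
    rw [← mul_le_mul_iff_of_pos_right hd]
    calc (Nat.choose (n-1) j : ℝ) * r * ((n:ℝ) - 1 - j)
        = (Nat.choose (n-1) (j+1) : ℝ) * ((j:ℝ)+1) * r := by rw [hCT]; ring
      _ ≤ (Nat.choose (n-1) (j+1) : ℝ) * r * r := by
          nlinarith [mul_nonneg (mul_nonneg hT0.le hr0) (sub_nonneg.mpr hjlt.le)]
      _ = (Nat.choose (n-1) (j+1) : ℝ) * (n:ℝ) := by rw [mul_assoc, hrn]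
      _ ≤ Real.exp 2 * (Nat.choose (n-1) (j+1) : ℝ) * ((n:ℝ) - 1 - j) := by
          nlinarith [mul_nonneg (sub_nonneg.mpr hexp) (mul_nonneg hT0.le hd.le),
            mul_nonneg hT0.le (by linarith : (0:ℝ) ≤ 3 * ((n:ℝ) - 1 - j) - (n:ℝ))]
  calc (((pivotSets n m).filter (fun P => (gap n P 1 : ℝ) ≤ s)).card : ℝ) * r
      ≤ s * (Nat.choose (n-1) j : ℝ) * r := mul_le_mul_of_nonneg_right hFle hr0
    _ = s * ((Nat.choose (n-1) j : ℝ) * r) := by ring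
    _ ≤ s * (Real.exp 2 * (Nat.choose (n-1) (j+1) : ℝ)) :=
        mul_le_mul_of_nonneg_left key (by linarith)
    _ = Real.exp 2 * s * (Nat.choose (n-1) (j+1) : ℝ) := by ring
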